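/- Let Q ∈ ℝ[X,Y], let r > 0, and let κ : ℝ → ℝ satisfy the regularity condition. Then Q(K(s,t), H(s,t)) = 0 for all s, t ∈ ℝ if and only if either (i) the polynomial r²·X − 2r·Y + 1 divides Q, or (ii) κ is identically zero and Q(0, 1/(2r)) = 0. -/

import Mathlib

open MvPolynomial

noncomputable def myphi (r : ℝ) : MvPolynomial (Fin 2) ℝ →ₐ[ℝ] Polynomial ℝ :=
  aeval ![Polynomial.X, Polynomial.C (r^2/(2*r)) * Polynomial.X + Polynomial.C (1/(2*r))]

lemma aux_dvd (r : ℝ) (hr : r ≠ 0) (Q : MvPolynomial (Fin 2) ℝ) :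
    (C (r ^ 2) * X 0 - C (2 * r) * X 1 + 1) ∣
      Q - Polynomial.aeval (X 0 : MvPolynomial (Fin 2) ℝ) (myphi r Q) := by
  have h2r : (2 * r) ≠ 0 := by simpa using hr
  induction Q using MvPolynomial.induction_on with
  | C a => simp [myphi]
  | add p q hp hq =>
      rw [show myphi r (p + q) = myphi r p + myphi r q from map_add _ _ _,
        show Polynomial.aeval (X 0 : MvPolynomial (Fin 2) ℝ) (myphi r p + myphi r q)
          = Polynomial.aeval (X 0 : MvPolynomial (Fin 2) ℝ) (myphi r p)
            + Polynomial.aeval (X 0 : MvPolynomial (Fin 2) ℝ) (myphi r q) from map_add _ _ _,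
        ← sub_add_sub_comm]
      exact dvd_add hp hq
  | mul_X p n hp =>
      rw [show myphi r (p * X n) = myphi r p * myphi r (X n) from map_mul _ _ _,
        show Polynomial.aeval (X 0 : MvPolynomial (Fin 2) ℝ) (myphi r p * myphi r (X n))
          = Polynomial.aeval (X 0 : MvPolynomial (Fin 2) ℝ) (myphi r p)
            * Polynomial.aeval (X 0 : MvPolynomial (Fin 2) ℝ) (myphi r (X n)) from map_mul _ _ _]
      have hXn : (C (r ^ 2) * X 0 - C (2 * r) * X 1 + 1) ∣
          (X n - Polynomial.aeval (X 0 : MvPolynomial (Fin 2) ℝ) (myphi r (X n))) := by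
        have hn : n = 0 ∨ n = 1 := by omega
        rcases hn with rfl | rfl
        · simp [myphi]
        · refine ⟨-(C (1/(2*r))), ?_⟩
          have hv : myphi r (X 1) = Polynomial.C (r^2/(2*r)) * Polynomial.X + Polynomial.C (1/(2*r)) := by
            simp [myphi]
          rw [hv]
          have h1 : MvPolynomial.C (2*r) * MvPolynomial.C (1/(2*r)) = (1 : MvPolynomial (Fin 2) ℝ) := by
            rw [← C_mul, mul_one_div, div_self h2r, C_1]
          have h2 : MvPolynomial.C (r^2) * MvPolynomial.C (1/(2*r)) = (C (r^2/(2*r)) : MvPolynomial (Fin 2) ℝ) := by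
            rw [← C_mul, mul_one_div]
          have h3 : (C 2 : MvPolynomial (Fin 2) ℝ) * C r = C (2*r) := by rw [← C_mul]
          simp only [map_add, map_mul, Polynomial.aeval_X, Polynomial.aeval_C, algebraMap_eq]
          linear_combination (X 0 : MvPolynomial (Fin 2) ℝ) * h2 - (X 1 : MvPolynomial (Fin 2) ℝ) * h1 - (X 1 : MvPolynomial (Fin 2) ℝ) * C (1/(2*r)) * h3
      have key : p * X n - Polynomial.aeval (X 0 : MvPolynomial (Fin 2) ℝ) (myphi r p) *
          Polynomial.aeval (X 0 : MvPolynomial (Fin 2) ℝ) (myphi r (X n)) =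
          (p - Polynomial.aeval (X 0 : MvPolynomial (Fin 2) ℝ) (myphi r p)) * X n +
          Polynomial.aeval (X 0 : MvPolynomial (Fin 2) ℝ) (myphi r p) *
            (X n - Polynomial.aeval (X 0 : MvPolynomial (Fin 2) ℝ) (myphi r (X n))) := by ring
      rw [key]
      exact dvd_add (hp.mul_right _) (hXn.mul_left _)

lemma aeval_eq_eval' (g : Fin 2 → ℝ) (p : MvPolynomial (Fin 2) ℝ) : aeval g p = eval g p := by
  rw [MvPolynomial.aeval_def, Algebra.algebraMap_self]
  rfl

lemma aux_eval (r x : ℝ) (Q : MvPolynomial (Fin 2) ℝ) :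
    Polynomial.eval x (myphi r Q) = eval ![x, r^2/(2*r)*x + 1/(2*r)] Q := by
  have h : (Polynomial.aeval x : Polynomial ℝ →ₐ[ℝ] ℝ).comp
      (aeval ![Polynomial.X, Polynomial.C (r^2/(2*r)) * Polynomial.X + Polynomial.C (1/(2*r))])
      = aeval (fun i => (Polynomial.aeval x)
          (![Polynomial.X, Polynomial.C (r^2/(2*r)) * Polynomial.X + Polynomial.C (1/(2*r))] i)) :=
    MvPolynomial.comp_aeval (f := ![Polynomial.X, Polynomial.C (r^2/(2*r)) * Polynomial.X + Polynomial.C (1/(2*r))]) (Polynomial.aeval x : Polynomial ℝ →ₐ[ℝ] ℝ)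
  have h2 := AlgHom.congr_fun h Q
  simp only [AlgHom.coe_comp, Function.comp_apply] at h2
  have hfun : (fun i => (Polynomial.aeval x)
      (![Polynomial.X, Polynomial.C (r^2/(2*r)) * Polynomial.X + Polynomial.C (1/(2*r))] i))
      = ![x, r^2/(2*r)*x + 1/(2*r)] := by
    funext i; fin_cases i <;> simp
  rw [hfun] at h2
  unfold myphi
  rw [← Polynomial.coe_aeval_eq_eval, h2, aeval_eq_eval']

theorem stmt_7 (Q : MvPolynomial (Fin 2) ℝ) (r : ℝ) (hr : 0 < r) (κ : ℝ → ℝ)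
    (hreg : ∀ s t : ℝ, 1 - r * κ s * Real.cos t ≠ 0) :
    (∀ s t : ℝ,
        eval ![κ s * Real.cos t / (r * (r * κ s * Real.cos t - 1)),
          (2 * r * κ s * Real.cos t - 1) / (2 * r * (r * κ s * Real.cos t - 1))] Q = 0) ↔
      ((C (r ^ 2) * X 0 - C (2 * r) * X 1 + 1) ∣ Q ∨
        ((∀ s, κ s = 0) ∧ eval ![0, 1 / (2 * r)] Q = 0)) := by
  have hr0 : r ≠ 0 := ne_of_gt hr
  have hd : ∀ s t : ℝ, r * κ s * Real.cos t - 1 ≠ 0 := by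
    intro s t h
    exact hreg s t (by linarith)
  constructor
  · intro hvan
    by_cases hk : ∀ s, κ s = 0
    · right
      refine ⟨hk, ?_⟩
      have h0 := hvan 0 0
      have hv : ![κ 0 * Real.cos 0 / (r * (r * κ 0 * Real.cos 0 - 1)),
          (2 * r * κ 0 * Real.cos 0 - 1) / (2 * r * (r * κ 0 * Real.cos 0 - 1))]
          = ![0, 1 / (2 * r)] := by
        funext i
        fin_cases i
        · simp [hk 0]
        · simp only [hk 0]
          norm_num
      rwa [hv] at h0
    · left
      push_neg at hk
      obtain ⟨s₀, hs₀⟩ := hk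
      -- the univariate polynomial is zero
      have hp0 : myphi r Q = 0 := by
        apply Polynomial.eq_zero_of_infinite_isRoot
        have hinj : Set.InjOn (fun t => κ s₀ * Real.cos t / (r * (r * κ s₀ * Real.cos t - 1)))
            (Set.Icc 0 Real.pi) := by
          intro t₁ ht₁ t₂ ht₂ he
          simp only at he
          have hd1 := hd s₀ t₁
          have hd2 := hd s₀ t₂
          have hcc : Real.cos t₁ = Real.cos t₂ := by
            have h1 : r * (r * κ s₀ * Real.cos t₁ - 1) ≠ 0 := mul_ne_zero hr0 hd1
            have h2 : r * (r * κ s₀ * Real.cos t₂ - 1) ≠ 0 := mul_ne_zero hr0 hd2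
            field_simp at he
            have : κ s₀ * Real.cos t₁ = κ s₀ * Real.cos t₂ := by
              have e1 : κ s₀ * Real.cos t₁ * r - 1 ≠ 0 := by intro h; apply hd1; linarith
              have e2 : κ s₀ * r * Real.cos t₂ - 1 ≠ 0 := by intro h; apply hd2; linarith
              rw [div_eq_div_iff e1 e2] at he
              linear_combination (-κ s₀) * he
            exact mul_left_cancel₀ hs₀ this
          exact Real.injOn_cos ht₁ ht₂ hcc
        have hsub : (fun t => κ s₀ * Real.cos t / (r * (r * κ s₀ * Real.cos t - 1))) ''
            (Set.Icc 0 Real.pi) ⊆ {x | Polynomial.IsRoot (myphi r Q) x} := by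
          rintro x ⟨t, _, rfl⟩
          have hdt := hd s₀ t
          simp only [Set.mem_setOf_eq, Polynomial.IsRoot, aux_eval]
          have hvv : ![κ s₀ * Real.cos t / (r * (r * κ s₀ * Real.cos t - 1)),
              r ^ 2 / (2 * r) * (κ s₀ * Real.cos t / (r * (r * κ s₀ * Real.cos t - 1))) + 1 / (2 * r)]
              = ![κ s₀ * Real.cos t / (r * (r * κ s₀ * Real.cos t - 1)),
              (2 * r * κ s₀ * Real.cos t - 1) / (2 * r * (r * κ s₀ * Real.cos t - 1))] := by
            funext i
            fin_cases i
            · rfl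
            · simp only [Fin.mk_one, Matrix.cons_val_one, Matrix.head_cons]
              field_simp
              ring
          rw [hvv]
          exact hvan s₀ t
        exact Set.Infinite.mono hsub ((Set.Icc_infinite Real.pi_pos).image hinj)
      have hdvd := aux_dvd r hr0 Q
      rwa [hp0, map_zero, sub_zero] at hdvd
  · rintro (⟨R, hR⟩ | ⟨hk, h0⟩) <;> intro s t
    · have hdt := hd s t
      rw [hR, eval_mul]
      have hP : eval ![κ s * Real.cos t / (r * (r * κ s * Real.cos t - 1)),
          (2 * r * κ s * Real.cos t - 1) / (2 * r * (r * κ s * Real.cos t - 1))]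
          (C (r ^ 2) * X 0 - C (2 * r) * X 1 + 1) = 0 := by
        simp only [eval_add, eval_sub, eval_mul, eval_C, eval_X, map_one,
          Matrix.cons_val_zero, Matrix.cons_val_one, Matrix.head_cons]
        field_simp
        ring
      rw [hP, zero_mul]
    · have hv : ![κ s * Real.cos t / (r * (r * κ s * Real.cos t - 1)),
          (2 * r * κ s * Real.cos t - 1) / (2 * r * (r * κ s * Real.cos t - 1))]
          = ![0, 1 / (2 * r)] := by
        funext i
        fin_cases i
        · simp [hk s]
        · simp only [hk s]
          norm_num
      rw [hv]
      exact h0
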